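/- Let ·: H⊗A → A be a partial action and (B,θ) a globalization with global action ▷. Then: (1) if r(B)=0 then r(A)=0; (2) if r(B)=0 then (B,θ) is a minimal globalization; (3) if r(A)=0, H has bijective antipode, and (B,θ) is minimal, then r(B)=0. -/

import Mathlib

open TensorProduct

section PartialHopfPrelude

variable (k : Type) [Field k] (H : Type) [Ring H] [HopfAlgebra k H]

/-- Sweedler-style sum `Σ f h₁ h₂` over the comultiplication of `h`. -/
noncomputable def sweedler {M : Type} [AddCommGroup M] [Module k M]
    (f : H →ₗ[k] H →ₗ[k] M) (h : H) : M :=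
  TensorProduct.lift f (Coalgebra.comul h)

variable {A : Type} [AddCommGroup A] [Module k A]

/-- `Σ (h₁ · a) * (h₂ g · b)`, with an explicit multiplication `mA` on `A`. -/
noncomputable def paRhs (mA : A →ₗ[k] A →ₗ[k] A) (act : H →ₗ[k] A →ₗ[k] A)
    (h g : H) (a b : A) : A :=
  sweedler k H ((mA.comp (act.flip a)).compl₂ ((act.flip b).comp (LinearMap.mulRight k g))) h

/-- `Σ (h₁ g · b) * (h₂ · a)`, with an explicit multiplication `mA` on `A`. -/
noncomputable def paSymmRhs (mA : A →ₗ[k] A →ₗ[k] A) (act : H →ₗ[k] A →ₗ[k] A)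
    (h g : H) (a b : A) : A :=
  sweedler k H ((mA.comp ((act.flip b).comp (LinearMap.mulRight k g))).compl₂ (act.flip a)) h

/-- A (left) partial action of the Hopf algebra `H` on `A`, where the (possibly nonunital,
possibly nonassociative) multiplication of `A` is given explicitly as a bilinear map `mA`:
`1_H · a = a` and `h · (a (g · b)) = Σ (h₁ · a)(h₂ g · b)`. -/
structure IsPartialActionOn (mA : A →ₗ[k] A →ₗ[k] A) (act : H →ₗ[k] A →ₗ[k] A) : Prop where
  one_act : ∀ a : A, act 1 a = a
  act_assoc : ∀ (h g : H) (a b : A), act h (mA a (act g b)) = paRhs k H mA act h g a b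

/-- A symmetrical partial action: additionally `h · ((g · b) a) = Σ (h₁ g · b)(h₂ · a)`. -/
structure IsSymmPartialActionOn (mA : A →ₗ[k] A →ₗ[k] A) (act : H →ₗ[k] A →ₗ[k] A)
    extends IsPartialActionOn k H mA act : Prop where
  act_symm : ∀ (h g : H) (a b : A), act h (mA (act g b) a) = paSymmRhs k H mA act h g a b

variable {B : Type} [NonUnitalRing B] [Module k B] [SMulCommClass k B B] [IsScalarTower k B B]

/-- A partial action of `H` on the nonunital algebra `B` (with its own multiplication). -/
def IsPartialAction (act : H →ₗ[k] B →ₗ[k] B) : Prop :=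
  IsPartialActionOn k H (LinearMap.mul k B) act

/-- A symmetrical partial action of `H` on the nonunital algebra `B`. -/
def IsSymmPartialAction (act : H →ₗ[k] B →ₗ[k] B) : Prop :=
  IsSymmPartialActionOn k H (LinearMap.mul k B) act

end PartialHopfPrelude

section ModuleAlgebraPrelude

variable (k : Type) [Field k] (H : Type) [Ring H] [HopfAlgebra k H]
variable {B : Type} [NonUnitalRing B] [Module k B] [SMulCommClass k B B] [IsScalarTower k B B]

/-- `B` is an `H`-module algebra (possibly nonunital) for the global action `gact`:
`1 ▷ b = b`, `h ▷ (b c) = Σ (h₁ ▷ b)(h₂ ▷ c)` and `h ▷ (g ▷ b) = (h g) ▷ b`. -/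
structure IsModuleAlgebra (gact : H →ₗ[k] B →ₗ[k] B) : Prop where
  one_act : ∀ b : B, gact 1 b = b
  act_mul : ∀ (h : H) (b c : B),
    gact h (b * c) =
      sweedler k H (((LinearMap.mul k B).comp (gact.flip b)).compl₂ (gact.flip c)) h
  act_act : ∀ (h g : H) (b : B), gact h (gact g b) = gact (h * g) b

end ModuleAlgebraPrelude

section GlobalizationPrelude

variable (k : Type) [Field k] (H : Type) [Ring H] [HopfAlgebra k H]
variable {A : Type} [NonUnitalRing A] [Module k A] [SMulCommClass k A A] [IsScalarTower k A A]
variable {B : Type} [NonUnitalRing B] [Module k B] [SMulCommClass k B B] [IsScalarTower k B B]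

/-- `(B, θ)` is a globalization of the partial action `act` of `H` on `A`:
`B` is an `H`-module algebra with action `gact`, `θ : A → B` is an algebra monomorphism,
`θ((h·a) b) = (h ▷ θ(a)) θ(b)` and `θ(b (h·a)) = θ(b)(h ▷ θ(a))`, `B = H ▷ θ(A)`, and
`h • θ(a) := θ(h · a)` defines a partial action of `H` on `θ(A)`. -/
structure IsGlobalization (act : H →ₗ[k] A →ₗ[k] A) (gact : H →ₗ[k] B →ₗ[k] B)
    (θ : A →ₗ[k] B) : Prop where
  moduleAlgebra : IsModuleAlgebra k H gact
  θ_inj : Function.Injective θ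
  θ_mul : ∀ a b : A, θ (a * b) = θ a * θ b
  compat_left : ∀ (h : H) (a b : A), θ (act h a * b) = gact h (θ a) * θ b
  compat_right : ∀ (h : H) (a b : A), θ (b * act h a) = θ b * gact h (θ a)
  spanning : ∀ x : B, x ∈ Submodule.span k {y : B | ∃ (h : H) (a : A), y = gact h (θ a)}
  induced : IsPartialAction k H act

/-- The globalization `(B, θ)` is minimal: if `Σᵢ (g hᵢ) · aᵢ = 0` for all `g ∈ H`, then
`Σᵢ hᵢ ▷ θ(aᵢ) = 0`. -/
def IsMinimalGlobalization (act : H →ₗ[k] A →ₗ[k] A) (gact : H →ₗ[k] B →ₗ[k] B)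
    (θ : A →ₗ[k] B) : Prop :=
  ∀ (n : ℕ) (h : Fin n → H) (a : Fin n → A),
    (∀ g : H, ∑ i, act (g * h i) (a i) = 0) → ∑ i, gact (h i) (θ (a i)) = 0

end GlobalizationPrelude


section Tools
open Coalgebra LinearMap

variable {k : Type} [Field k] {H : Type} [Ring H] [HopfAlgebra k H]

lemma repr_counit_smul_right {M : Type} [AddCommGroup M] [Module k M] [Coalgebra k M] {x : M} {ι : Type*}
    (r : Repr k x ι) : ∑ i ∈ r.index, counit (R := k) (r.left i) • r.right i = x := by
  have h := congrArg (TensorProduct.lid k M) (sum_counit_tmul_eq r)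
  simp only [map_sum, lid_tmul, one_smul] at h
  exact h

lemma repr_counit_smul_left {M : Type} [AddCommGroup M] [Module k M] [Coalgebra k M] {x : M} {ι : Type*}
    (r : Repr k x ι) : ∑ i ∈ r.index, counit (R := k) (r.right i) • r.left i = x := by
  have h := congrArg (TensorProduct.rid k M) (sum_tmul_counit_eq r)
  simp only [map_sum, rid_tmul, one_smul] at h
  exact h

lemma sweedler_repr {M : Type} [AddCommGroup M] [Module k M] (f : H →ₗ[k] H →ₗ[k] M) {h : H} {ι : Type*}
    (r : Repr k h ι) : sweedler k H f h = ∑ i ∈ r.index, f (r.left i) (r.right i) := by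
  rw [sweedler, ← r.eq, map_sum]
  simp

/-- Convolution product of two linear maps from a coalgebra to `H`. -/
noncomputable def conv {M : Type} [AddCommGroup M] [Module k M] [Coalgebra k M]
    (f g : M →ₗ[k] H) : M →ₗ[k] H :=
  mul' k H ∘ₗ TensorProduct.map f g ∘ₗ comul

lemma conv_repr {M : Type} [AddCommGroup M] [Module k M] [Coalgebra k M]
    (f g : M →ₗ[k] H) {x : M} {ι : Type*} (r : Repr k x ι) :
    conv f g x = ∑ i ∈ r.index, f (r.left i) * g (r.right i) := by
  simp only [conv, comp_apply, ← r.eq, map_sum]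
  simp

lemma conv_unit_left {M : Type} [AddCommGroup M] [Module k M] [Coalgebra k M]
    (f : M →ₗ[k] H) : conv ((Algebra.linearMap k H) ∘ₗ counit) f = f := by
  ext x
  rw [conv_repr _ _ (ℛ k x)]
  simp only [comp_apply, Algebra.linearMap_apply, ← Algebra.smul_def, ← map_smul]
  rw [← map_sum, repr_counit_smul_right]

lemma conv_unit_right {M : Type} [AddCommGroup M] [Module k M] [Coalgebra k M]
    (f : M →ₗ[k] H) : conv f ((Algebra.linearMap k H) ∘ₗ counit) = f := by
  ext x
  rw [conv_repr _ _ (ℛ k x)]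
  simp only [comp_apply, Algebra.linearMap_apply]
  have : ∀ i ∈ (ℛ k x).index, f ((ℛ k x).left i) * algebraMap k H (counit ((ℛ k x).right i))
      = counit (R := k) ((ℛ k x).right i) • f ((ℛ k x).left i) := by
    intro i _
    rw [Algebra.smul_def, Algebra.commutes]
  rw [Finset.sum_congr rfl this]
  simp only [← map_smul]
  rw [← map_sum, repr_counit_smul_left]

lemma conv_assoc {M : Type} [AddCommGroup M] [Module k M] [Coalgebra k M]
    (f g h : M →ₗ[k] H) : conv (conv f g) h = conv f (conv g h) := by
  ext x
  set r := ℛ k x with hr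
  set a₁ : (i : r.ι) → Repr k (r.left i) (M × M) := fun i => ℛ k (r.left i) with ha₁
  set a₂ : (i : r.ι) → Repr k (r.right i) (M × M) := fun i => ℛ k (r.right i) with ha₂
  have key := sum_tmul_tmul_eq r a₁ a₂
  have key2 := congrArg (mul' k H ∘ₗ lTensor H (mul' k H) ∘ₗ
    (TensorProduct.map f (TensorProduct.map g h))) key
  simp only [map_sum, comp_apply, TensorProduct.map_tmul, lTensor_tmul, mul'_apply] at key2
  rw [conv_repr (conv f g) h r, conv_repr f (conv g h) r]
  calc ∑ i ∈ r.index, conv f g (r.left i) * h (r.right i)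
      = ∑ i ∈ r.index, ∑ j ∈ (a₁ i).index,
          f ((a₁ i).left j) * (g ((a₁ i).right j) * h (r.right i)) := by
        refine Finset.sum_congr rfl fun i _ => ?_
        rw [conv_repr f g (a₁ i), Finset.sum_mul]
        exact Finset.sum_congr rfl fun j _ => mul_assoc _ _ _
    _ = ∑ i ∈ r.index, ∑ j ∈ (a₂ i).index,
          f (r.left i) * (g ((a₂ i).left j) * h ((a₂ i).right j)) := key2
    _ = ∑ i ∈ r.index, f (r.left i) * conv g h (r.right i) := by
        refine Finset.sum_congr rfl fun i _ => ?_
        rw [conv_repr g h (a₂ i), Finset.mul_sum]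


/-- A representation of `comul (a ⊗ₜ b)` in the tensor-product coalgebra. -/
noncomputable def tmulRepr {a b : H} {ι₁ ι₂ : Type*} (ra : Repr k a ι₁) (rb : Repr k b ι₂) :
    Repr k (a ⊗ₜ[k] b : H ⊗[k] H) (ι₁ × ι₂) where
  index := ra.index ×ˢ rb.index
  left := fun p => ra.left p.1 ⊗ₜ rb.left p.2
  right := fun p => ra.right p.1 ⊗ₜ rb.right p.2
  eq := by
    show _ = Coalgebra.comul (R := k) (a ⊗ₜ[k] b)
    rw [TensorProduct.comul_tmul,
      ← ra.eq, ← rb.eq, TensorProduct.sum_tmul]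
    simp only [map_sum, TensorProduct.tmul_sum, Finset.sum_product]
    refine Finset.sum_congr rfl fun i _ => Finset.sum_congr rfl fun j _ => ?_
    rfl

/-- A representation of `comul (a * b)`. -/
noncomputable def mulRepr {a b : H} {ι₁ ι₂ : Type*} (ra : Repr k a ι₁) (rb : Repr k b ι₂) :
    Repr k (a * b) (ι₁ × ι₂) where
  index := ra.index ×ˢ rb.index
  left := fun p => ra.left p.1 * rb.left p.2
  right := fun p => ra.right p.1 * rb.right p.2
  eq := by
    rw [Finset.sum_product, Bialgebra.comul_mul, ← ra.eq, ← rb.eq, Finset.sum_mul_sum]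
    simp only [Algebra.TensorProduct.tmul_mul_tmul]

lemma antipode_one_eq : HopfAlgebra.antipode (R := k) (A := H) 1 = 1 := by
  have h := HopfAlgebra.mul_antipode_rTensor_comul_apply (R := k) (a := (1 : H))
  rw [Bialgebra.comul_one] at h
  simpa [Algebra.TensorProduct.one_def] using h

lemma antipode_mul_antidistrib (a b : H) :
    HopfAlgebra.antipode (R := k) (A := H) (a * b) =
      HopfAlgebra.antipode (R := k) (A := H) b * HopfAlgebra.antipode (R := k) (A := H) a := by
  set S := HopfAlgebra.antipode (R := k) (A := H) with hS
  set uε : (H ⊗[k] H) →ₗ[k] H := (Algebra.linearMap k H) ∘ₗ counit with huε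
  set m : (H ⊗[k] H) →ₗ[k] H := mul' k H with hm
  set F : (H ⊗[k] H) →ₗ[k] H := S ∘ₗ mul' k H with hF
  set G : (H ⊗[k] H) →ₗ[k] H :=
    mul' k H ∘ₗ TensorProduct.map S S ∘ₗ (TensorProduct.comm k H H).toLinearMap with hG
  have h1 : conv F m = uε := by
    apply TensorProduct.ext'
    intro x y
    rw [conv_repr _ _ (tmulRepr (ℛ k x) (ℛ k y))]
    have h := HopfAlgebra.sum_antipode_mul_eq_algebraMap_counit (R := k) (mulRepr (ℛ k x) (ℛ k y))
    simp only [mulRepr] at h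
    simp only [tmulRepr, hF, hm, comp_apply, mul'_apply]
    rw [h]
    simp [huε, TensorProduct.counit_tmul]
    exact Algebra.commutes _ _
  have h2 : conv m G = uε := by
    apply TensorProduct.ext'
    intro x y
    rw [conv_repr _ _ (tmulRepr (ℛ k x) (ℛ k y))]
    simp only [tmulRepr, hm, hG, comp_apply, LinearEquiv.coe_coe, TensorProduct.comm_tmul,
      TensorProduct.map_tmul, mul'_apply]
    rw [Finset.sum_product]
    have inner : ∀ i ∈ (ℛ k x).index,
        ∑ j ∈ (ℛ k y).index,
            (ℛ k x).left i * (ℛ k y).left j * (S ((ℛ k y).right j) * S ((ℛ k x).right i))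
          = counit (R := k) y • ((ℛ k x).left i * S ((ℛ k x).right i)) := by
      intro i _
      have : ∀ j ∈ (ℛ k y).index,
          (ℛ k x).left i * (ℛ k y).left j * (S ((ℛ k y).right j) * S ((ℛ k x).right i))
            = (ℛ k x).left i * (((ℛ k y).left j * S ((ℛ k y).right j)) * S ((ℛ k x).right i)) := by
        intro j _
        rw [mul_assoc, mul_assoc]
      rw [Finset.sum_congr rfl this, ← Finset.mul_sum, ← Finset.sum_mul,
        HopfAlgebra.sum_mul_antipode_eq_smul (ℛ k y)]
      rw [smul_mul_assoc, one_mul, mul_smul_comm]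
    rw [Finset.sum_congr rfl inner, ← Finset.smul_sum,
      HopfAlgebra.sum_mul_antipode_eq_smul (ℛ k x)]
    simp only [huε, comp_apply, TensorProduct.counit_tmul, TensorProduct.map_tmul,
      mul'_apply, smul_smul, Algebra.linearMap_apply, Algebra.smul_def, map_mul, mul_one]
    simp
  have key : F = G := by
    calc F = conv F uε := (conv_unit_right F).symm
      _ = conv F (conv m G) := by rw [h2]
      _ = conv (conv F m) G := (conv_assoc F m G).symm
      _ = conv uε G := by rw [h1]
      _ = G := conv_unit_left G
  have hab := congrArg (fun φ : (H ⊗[k] H) →ₗ[k] H => φ (a ⊗ₜ b)) key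
  simpa [hF, hG] using hab


lemma sum_right_mul_invAntipode (S' : H →ₗ[k] H)
    (hinj : Function.Injective (HopfAlgebra.antipode (R := k) (A := H)))
    (hcomp : ∀ x : H, HopfAlgebra.antipode (R := k) (A := H) (S' x) = x)
    {m : H} {ι : Type*} (r : Repr k m ι) :
    ∑ i ∈ r.index, r.right i * S' (r.left i) = counit (R := k) m • 1 := by
  apply hinj
  rw [map_sum, map_smul, antipode_one_eq]
  have : ∀ i ∈ r.index, HopfAlgebra.antipode (R := k) (A := H) (r.right i * S' (r.left i))
      = r.left i * HopfAlgebra.antipode (R := k) (A := H) (r.right i) := by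
    intro i _
    rw [antipode_mul_antidistrib, hcomp]
  rw [Finset.sum_congr rfl this, HopfAlgebra.sum_mul_antipode_eq_smul r]

section MA

variable {B : Type} [NonUnitalRing B] [Module k B] [SMulCommClass k B B] [IsScalarTower k B B]
variable {gact : H →ₗ[k] B →ₗ[k] B}

lemma ma_expand (hma : IsModuleAlgebra k H gact) (g : H) (x y : B) {ι : Type*} (r : Repr k g ι) :
    ∑ i ∈ r.index, gact (r.left i)
        (x * gact (HopfAlgebra.antipode (R := k) (A := H) (r.right i)) y) = gact g x * y := by
  set S := HopfAlgebra.antipode (R := k) (A := H) with hS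
  set a₁ : (i : r.ι) → Repr k (r.left i) (H × H) := fun i => ℛ k (r.left i) with ha₁
  set a₂ : (i : r.ι) → Repr k (r.right i) (H × H) := fun i => ℛ k (r.right i) with ha₂
  set ψ : H ⊗[k] (H ⊗[k] H) →ₗ[k] B :=
    mul' k B ∘ₗ TensorProduct.map (gact.flip x) ((gact.flip y) ∘ₗ mul' k H ∘ₗ lTensor H S)
    with hψ
  have hψt : ∀ (u v w : H), ψ (u ⊗ₜ (v ⊗ₜ w)) = gact u x * gact (v * S w) y := by
    intro u v w
    simp [hψ]
  have key := congrArg ψ (sum_tmul_tmul_eq r a₁ a₂)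
  simp only [map_sum, hψt] at key
  calc ∑ i ∈ r.index, gact (r.left i) (x * gact (S (r.right i)) y)
      = ∑ i ∈ r.index, ∑ j ∈ (a₁ i).index,
          gact ((a₁ i).left j) x * gact ((a₁ i).right j * S (r.right i)) y := by
        refine Finset.sum_congr rfl fun i _ => ?_
        rw [hma.act_mul, sweedler_repr _ (a₁ i)]
        refine Finset.sum_congr rfl fun j _ => ?_
        simp only [compl₂_apply, comp_apply, flip_apply, LinearMap.mul_apply']
        rw [hma.act_act]
    _ = ∑ i ∈ r.index, ∑ j ∈ (a₂ i).index,
          gact (r.left i) x * gact ((a₂ i).left j * S ((a₂ i).right j)) y := key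
    _ = ∑ i ∈ r.index, counit (R := k) (r.right i) • (gact (r.left i) x) * y := by
        refine Finset.sum_congr rfl fun i _ => ?_
        rw [← Finset.mul_sum, ← LinearMap.sum_apply, ← map_sum,
          HopfAlgebra.sum_mul_antipode_eq_smul (a₂ i), map_smul, LinearMap.smul_apply,
          hma.one_act, mul_smul_comm, smul_mul_assoc]
    _ = gact g x * y := by
        have : ∀ i ∈ r.index, counit (R := k) (r.right i) • gact (r.left i) x
            = gact (counit (R := k) (r.right i) • r.left i) x := fun i _ => by
          rw [map_smul, LinearMap.smul_apply]
        rw [← Finset.sum_mul, Finset.sum_congr rfl this, ← LinearMap.sum_apply, ← map_sum,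
          repr_counit_smul_left r]

lemma ma_expand_inv (hma : IsModuleAlgebra k H gact) (S' : H →ₗ[k] H)
    (hinj : Function.Injective (HopfAlgebra.antipode (R := k) (A := H)))
    (hcomp : ∀ x : H, HopfAlgebra.antipode (R := k) (A := H) (S' x) = x)
    (g : H) (x y : B) {ι : Type*} (r : Repr k g ι) :
    ∑ i ∈ r.index, gact (r.right i)
        (gact (S' (r.left i)) x * y) = x * gact g y := by
  set a₁ : (i : r.ι) → Repr k (r.left i) (H × H) := fun i => ℛ k (r.left i) with ha₁
  set a₂ : (i : r.ι) → Repr k (r.right i) (H × H) := fun i => ℛ k (r.right i) with ha₂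
  set ψ : H ⊗[k] (H ⊗[k] H) →ₗ[k] B :=
    mul' k B ∘ₗ
      TensorProduct.map
        ((gact.flip x) ∘ₗ mul' k H ∘ₗ lTensor H S' ∘ₗ (TensorProduct.comm k H H).toLinearMap)
        (gact.flip y) ∘ₗ
      (TensorProduct.assoc k H H H).symm.toLinearMap with hψ
  have hψt : ∀ (u v w : H), ψ (u ⊗ₜ (v ⊗ₜ w)) = gact (v * S' u) x * gact w y := by
    intro u v w
    simp [hψ]
  have key := congrArg ψ (sum_tmul_tmul_eq r a₁ a₂)
  simp only [map_sum, hψt] at key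
  calc ∑ i ∈ r.index, gact (r.right i) (gact (S' (r.left i)) x * y)
      = ∑ i ∈ r.index, ∑ j ∈ (a₂ i).index,
          gact ((a₂ i).left j * S' (r.left i)) x * gact ((a₂ i).right j) y := by
        refine Finset.sum_congr rfl fun i _ => ?_
        rw [hma.act_mul, sweedler_repr _ (a₂ i)]
        refine Finset.sum_congr rfl fun j _ => ?_
        simp only [compl₂_apply, comp_apply, flip_apply, LinearMap.mul_apply']
        rw [hma.act_act]
    _ = ∑ i ∈ r.index, ∑ j ∈ (a₁ i).index,
          gact ((a₁ i).right j * S' ((a₁ i).left j)) x * gact (r.right i) y := key.symm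
    _ = ∑ i ∈ r.index, counit (R := k) (r.left i) • (x * gact (r.right i) y) := by
        refine Finset.sum_congr rfl fun i _ => ?_
        rw [← Finset.sum_mul, ← LinearMap.sum_apply, ← map_sum,
          sum_right_mul_invAntipode S' hinj hcomp (a₁ i), map_smul, LinearMap.smul_apply,
          hma.one_act, smul_mul_assoc]
    _ = x * gact g y := by
        have : ∀ i ∈ r.index, counit (R := k) (r.left i) • (x * gact (r.right i) y)
            = x * gact (counit (R := k) (r.left i) • r.right i) y := fun i _ => by
          rw [map_smul, LinearMap.smul_apply, mul_smul_comm]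
        rw [Finset.sum_congr rfl this, ← Finset.mul_sum, ← LinearMap.sum_apply, ← map_sum,
          repr_counit_smul_right r]

end MA

end Tools
section Stmt11

variable {k : Type} [Field k] {H : Type} [Ring H] [HopfAlgebra k H]
variable {A : Type} [NonUnitalRing A] [Module k A] [SMulCommClass k A A] [IsScalarTower k A A]
variable {B : Type} [NonUnitalRing B] [Module k B] [SMulCommClass k B B] [IsScalarTower k B B]

/-- Let `(B, θ)` be a globalization of the partial action `act` on `A`.
(1) If `r(B) = 0` then `r(A) = 0`; (2) if `r(B) = 0` then `(B, θ)` is minimal;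
(3) if `r(A) = 0`, the antipode of `H` is bijective and `(B, θ)` is minimal, then `r(B) = 0`. -/
theorem globalization_right_annihilator
    (act : H →ₗ[k] A →ₗ[k] A) (gact : H →ₗ[k] B →ₗ[k] B) (θ : A →ₗ[k] B)
    (hglob : IsGlobalization k H act gact θ) :
    ((∀ b : B, (∀ c : B, c * b = 0) → b = 0) → (∀ a : A, (∀ c : A, c * a = 0) → a = 0)) ∧
    ((∀ b : B, (∀ c : B, c * b = 0) → b = 0) → IsMinimalGlobalization k H act gact θ) ∧
    ((∀ a : A, (∀ c : A, c * a = 0) → a = 0) →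
      Function.Bijective (HopfAlgebra.antipode (R := k) (A := H)) →
      IsMinimalGlobalization k H act gact θ →
      (∀ b : B, (∀ c : B, c * b = 0) → b = 0)) := by
  open Coalgebra LinearMap in
  refine ⟨?_, ?_, ?_⟩
  · -- (1)
    intro hB a ha
    have hza : θ a = 0 := by
      refine hB (θ a) fun c => ?_
      refine Submodule.span_induction (p := fun c _ => c * θ a = 0) ?_ ?_ ?_ ?_ (hglob.spanning c)
      · rintro x ⟨g, b, rfl⟩
        rw [← hglob.compat_left, ha (act g b), map_zero]
      · exact zero_mul _
      · intro x y _ _ hx hy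
        have hx' : x * θ a = 0 := hx
        have hy' : y * θ a = 0 := hy
        rw [add_mul, hx', hy', add_zero]
      · intro c x _ hx
        have hx' : x * θ a = 0 := hx
        rw [smul_mul_assoc, hx', smul_zero]
    have := hglob.θ_inj (a₁ := a) (a₂ := 0)
    simp only [map_zero] at this
    exact this hza
  · -- (2)
    intro hB n hs as hz
    refine hB _ fun c => ?_
    refine Submodule.span_induction (p := fun c _ => c * (∑ i, gact (hs i) (θ (as i))) = 0)
      ?_ ?_ ?_ ?_ (hglob.spanning c)
    · rintro x ⟨g, b, rfl⟩
      rw [← ma_expand hglob.moduleAlgebra g (θ b) (∑ i, gact (hs i) (θ (as i))) (ℛ k g)]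
      refine Finset.sum_eq_zero fun i _ => ?_
      have : θ b * gact (HopfAlgebra.antipode (R := k) (A := H) ((ℛ k g).right i))
          (∑ j, gact (hs j) (θ (as j))) = 0 := by
        rw [map_sum, Finset.mul_sum]
        have : ∀ j ∈ Finset.univ, θ b * gact (HopfAlgebra.antipode (R := k) (A := H)
            ((ℛ k g).right i)) (gact (hs j) (θ (as j))) = θ (b * act
            (HopfAlgebra.antipode (R := k) (A := H) ((ℛ k g).right i) * hs j) (as j)) := by
          intro j _
          rw [hglob.moduleAlgebra.act_act, hglob.compat_right]
        rw [Finset.sum_congr rfl this, ← map_sum, ← Finset.mul_sum,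
          hz (HopfAlgebra.antipode (R := k) (A := H) ((ℛ k g).right i)), mul_zero, map_zero]
      rw [this, map_zero]
    · exact zero_mul _
    · intro x y _ _ hx hy
      have hx' : x * (∑ i, gact (hs i) (θ (as i))) = 0 := hx
      have hy' : y * (∑ i, gact (hs i) (θ (as i))) = 0 := hy
      rw [add_mul, hx', hy', add_zero]
    · intro c x _ hx
      have hx' : x * (∑ i, gact (hs i) (θ (as i))) = 0 := hx
      rw [smul_mul_assoc, hx', smul_zero]
  · -- (3)
    intro hA hbij hmin b hb
    set S := HopfAlgebra.antipode (R := k) (A := H) with hS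
    set S' : H →ₗ[k] H := (LinearEquiv.ofBijective S hbij).symm.toLinearMap with hS'
    have hcomp : ∀ x : H, S (S' x) = x := fun x =>
      (LinearEquiv.ofBijective S hbij).apply_symm_apply x
    obtain ⟨n, f, g, hg⟩ := Submodule.mem_span_set'.mp (hglob.spanning b)
    choose hi ai hgi using fun i => (g i).2
    have hb' : b = ∑ i, gact (hi i) (θ (f i • ai i)) := by
      rw [← hg]
      refine Finset.sum_congr rfl fun i _ => ?_
      rw [hgi i]
      simp
    have key : ∀ q : H, ∑ i, act (q * hi i) (f i • ai i) = 0 := by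
      intro q
      refine hA _ fun c => ?_
      have h1 : θ (c * ∑ i, act (q * hi i) (f i • ai i)) = θ c * gact q b := by
        rw [Finset.mul_sum, map_sum]
        have : ∀ i ∈ Finset.univ, θ (c * act (q * hi i) (f i • ai i))
            = θ c * gact q (gact (hi i) (θ (f i • ai i))) := by
          intro i _
          rw [hglob.compat_right, hglob.moduleAlgebra.act_act]
        rw [Finset.sum_congr rfl this, ← Finset.mul_sum, ← map_sum, ← hb']
      have h2 : θ c * gact q b = 0 := by
        rw [← ma_expand_inv hglob.moduleAlgebra S' hbij.injective hcomp q (θ c) b (ℛ k q)]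
        refine Finset.sum_eq_zero fun i _ => ?_
        rw [hb (gact (S' ((ℛ k q).left i)) (θ c)), map_zero]
      refine hglob.θ_inj ?_
      rw [map_zero]
      exact h1.trans h2
    have := hmin n hi (fun i => f i • ai i) key
    rw [hb', this]


end Stmt11
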